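/- For every graph G of order n, n ≥ adim(G) ≥ bdim(G), and bdim(G) = Ω(log n); more precisely, adim(G) ≥ bdim(G) and there is a constant c > 0 such that bdim(G) ≥ c·log n for all graphs G on n vertices. -/

import Mathlib

open SimpleGraph Finset

/-- `A` is an adjacency resolving set of `G`. -/
def IsAdjResolving {V : Type*} (G : SimpleGraph V) (A : Set V) : Prop :=
  ∀ x y : V, x ≠ y → ∃ z ∈ A, min (G.edist z x) 2 ≠ min (G.edist z y) 2

/-- The adjacency dimension of `G`. -/
noncomputable def adim {V : Type*} [Fintype V] [DecidableEq V] (G : SimpleGraph V) : ℕ :=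
  sInf {n | ∃ A : Finset V, IsAdjResolving G ↑A ∧ A.card = n}

/-- `C` is a locating-dominating set of `G`. -/
def IsLocDom {V : Type*} (G : SimpleGraph V) (C : Set V) : Prop :=
  (∀ v ∉ C, ((G.neighborSet v ∪ {v}) ∩ C).Nonempty) ∧
  ∀ u ∉ C, ∀ v ∉ C, u ≠ v →
    (G.neighborSet u ∪ {u}) ∩ C ≠ (G.neighborSet v ∪ {v}) ∩ C

/-- The locating-dominating number of `G`. -/
noncomputable def LD {V : Type*} [Fintype V] [DecidableEq V] (G : SimpleGraph V) : ℕ :=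
  sInf {n | ∃ C : Finset V, IsLocDom G ↑C ∧ C.card = n}

/-- `f` is a resolving broadcast of `G`. -/
def IsResolvingBroadcast {V : Type*} (G : SimpleGraph V) (f : V → ℕ) : Prop :=
  ∀ x y : V, x ≠ y → ∃ z, 0 < f z ∧
    min (G.edist z x) ((f z : ℕ∞) + 1) ≠ min (G.edist z y) ((f z : ℕ∞) + 1)

/-- The broadcast dimension of `G`. -/
noncomputable def bdim {V : Type*} [Fintype V] (G : SimpleGraph V) : ℕ :=
  sInf {n | ∃ f : V → ℕ, IsResolvingBroadcast G f ∧ ∑ v, f v = n}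

/-- There is a directed path of length `m` from `u` to `v` in the digraph `D`. -/
def DPath {V : Type*} (D : V → V → Prop) (u v : V) (m : ℕ) : Prop :=
  ∃ p : Fin (m + 1) → V, p 0 = u ∧ p (Fin.last m) = v ∧
    ∀ i : Fin m, D (p i.castSucc) (p i.succ)

/-- Directed distance in the digraph `D` (∞ if there is no directed path). -/
noncomputable def ddist {V : Type*} (D : V → V → Prop) (u v : V) : ℕ∞ :=
  sInf {n : ℕ∞ | ∃ m : ℕ, DPath D u v m ∧ n = m}

/-- `A` is an adjacency resolving set of the digraph `D`. -/
def IsDirAdjResolving {V : Type*} (D : V → V → Prop) (A : Set V) : Prop :=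
  ∀ x y : V, x ≠ y → ∃ z ∈ A, min (ddist D z x) 2 ≠ min (ddist D z y) 2

/-- The adjacency dimension of the digraph `D`. -/
noncomputable def dirAdim {V : Type*} [Fintype V] [DecidableEq V] (D : V → V → Prop) : ℕ :=
  sInf {n | ∃ A : Finset V, IsDirAdjResolving D ↑A ∧ A.card = n}

/-- `f` is a resolving broadcast of the digraph `D`. -/
def IsDirResolvingBroadcast {V : Type*} (D : V → V → Prop) (f : V → ℕ) : Prop :=
  ∀ x y : V, x ≠ y → ∃ z, 0 < f z ∧
    min (ddist D z x) ((f z : ℕ∞) + 1) ≠ min (ddist D z y) ((f z : ℕ∞) + 1)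

/-- The broadcast dimension of the digraph `D`. -/
noncomputable def dirBdim {V : Type*} [Fintype V] (D : V → V → Prop) : ℕ :=
  sInf {n | ∃ f : V → ℕ, IsDirResolvingBroadcast D f ∧ ∑ v, f v = n}

/-- `D` is an orientation of the simple graph `G`. -/
def IsOrientation {V : Type*} (G : SimpleGraph V) (D : V → V → Prop) : Prop :=
  (∀ u v, G.Adj u v ↔ (D u v ∨ D v u)) ∧ ∀ u v, ¬(D u v ∧ D v u)

/-- The adjacency dimension as the minimum total weight of a resolving
broadcast taking values in {0,1}. -/
noncomputable def adimB {V : Type*} [Fintype V] (G : SimpleGraph V) : ℕ :=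
  sInf {n | ∃ f : V → ℕ, IsResolvingBroadcast G f ∧ (∀ v, f v ≤ 1) ∧ ∑ v, f v = n}

/-- For every graph `G` of order `n`: `n ≥ adim(G) ≥ bdim(G)`, and
`bdim(G) = Ω(log n)`. -/
lemma allones_resolving {n : ℕ} (G : SimpleGraph (Fin n)) :
    IsResolvingBroadcast G (fun _ => 1) := by
  intro x y hxy
  refine ⟨x, one_pos, ?_⟩
  have h1 : G.edist x x = 0 := SimpleGraph.edist_self
  have h2 : G.edist x y ≠ 0 := fun h => hxy (SimpleGraph.edist_eq_zero_iff.mp h)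
  rw [h1, min_eq_left zero_le]
  have h3 : (0:ℕ∞) < min (G.edist x y) (((1:ℕ):ℕ∞)+1) :=
    lt_min (pos_iff_ne_zero.mpr h2) (by norm_num)
  exact h3.ne


lemma aux_pow (m : ℕ) (hm : 1 ≤ m) : m + 2 ≤ 3 ^ m := by
  induction m with
  | zero => omega
  | succ k ih =>
    rcases Nat.eq_or_lt_of_le hm with h | h
    · have : k = 0 := by omega
      subst this; norm_num
    · have h1 : 1 ≤ k := by omega
      have := ih h1
      have : 3 ^ k ≤ 3 ^ (k+1) := Nat.pow_le_pow_right (by norm_num) (by omega)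
      calc k + 1 + 2 ≤ 3 ^ k + 1 := by omega
        _ ≤ 3 ^ (k+1) := by rw [pow_succ]; omega

lemma counting {n : ℕ} (G : SimpleGraph (Fin n)) (f : Fin n → ℕ)
    (hf : IsResolvingBroadcast G f) : n ≤ 3 ^ (∑ v, f v) := by
  classical
  set S : Finset (Fin n) := univ.filter (fun v => 0 < f v) with hS
  have hnetop : ∀ m : ℕ, ((m : ℕ∞) + 1) ≠ ⊤ := by
    intro m
    rw [show ((m:ℕ∞)+1) = ((m+1:ℕ):ℕ∞) by push_cast; ring]
    exact ENat.coe_ne_top _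
  have hbound : ∀ (z : Fin n) (x : Fin n),
      (min (G.edist z x) ((f z : ℕ∞) + 1)).toNat < f z + 2 := by
    intro z x
    have h1 : min (G.edist z x) ((f z : ℕ∞) + 1) ≤ ((f z + 1 : ℕ) : ℕ∞) := by
      push_cast; exact min_le_right _ _
    have := ENat.toNat_le_toNat h1 (ENat.coe_ne_top _)
    rw [ENat.toNat_coe] at this
    omega
  let h : Fin n → (∀ z : S, Fin (f z + 2)) := fun x z =>
    ⟨(min (G.edist z x) ((f z : ℕ∞) + 1)).toNat, hbound z x⟩
  have hinj : Function.Injective h := by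
    intro x y hxy
    by_contra hne
    obtain ⟨z, hz, hmin⟩ := hf x y hne
    have hzS : z ∈ S := by simp [hS, hz]
    have := congr_fun hxy ⟨z, hzS⟩
    apply hmin
    have hx : min (G.edist z x) ((f z : ℕ∞) + 1) ≠ ⊤ := by
      intro h'
      have := min_le_right (G.edist z x) ((f z : ℕ∞) + 1)
      rw [h'] at this
      exact hnetop (f z) (top_le_iff.mp this)
    have hy : min (G.edist z y) ((f z : ℕ∞) + 1) ≠ ⊤ := by
      intro h'
      have := min_le_right (G.edist z y) ((f z : ℕ∞) + 1)
      rw [h'] at this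
      exact hnetop (f z) (top_le_iff.mp this)
    have h2 : (min (G.edist z x) ((f z : ℕ∞) + 1)).toNat
        = (min (G.edist z y) ((f z : ℕ∞) + 1)).toNat := by
      simpa [h] using congr_arg Fin.val this
    calc min (G.edist z x) ((f z : ℕ∞) + 1)
        = ((min (G.edist z x) ((f z : ℕ∞) + 1)).toNat : ℕ∞) := (ENat.coe_toNat hx).symm
      _ = ((min (G.edist z y) ((f z : ℕ∞) + 1)).toNat : ℕ∞) := by rw [h2]
      _ = min (G.edist z y) ((f z : ℕ∞) + 1) := ENat.coe_toNat hy
  have hcard : n ≤ Fintype.card (∀ z : S, Fin (f z + 2)) := by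
    simpa using Fintype.card_le_of_injective h hinj
  rw [Fintype.card_pi] at hcard
  simp only [Fintype.card_fin] at hcard
  have h3 : ∏ z : S, (f z + 2) ≤ 3 ^ (∑ v, f v) := by
    have h4 : ∏ z : S, (f z + 2) = ∏ z ∈ S, (f z + 2) :=
      Finset.prod_coe_sort S (fun z => f z + 2)
    rw [h4]
    calc ∏ z ∈ S, (f z + 2) ≤ ∏ z ∈ S, 3 ^ (f z) := by
          apply Finset.prod_le_prod
          · intro i _; positivity
          · intro i hi
            exact aux_pow _ (by simpa [hS, Nat.one_le_iff_ne_zero, Nat.pos_iff_ne_zero] using (Finset.mem_filter.mp hi).2)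
      _ = 3 ^ (∑ z ∈ S, f z) := Finset.prod_pow_eq_pow_sum _ _ _
      _ = 3 ^ (∑ v, f v) := by
          congr 1
          rw [hS]
          exact Finset.sum_filter_of_ne (fun x _ h => Nat.pos_of_ne_zero h)
  exact hcard.trans h3

theorem stmt_19 :
    ∃ c : ℝ, 0 < c ∧ ∀ (n : ℕ) (G : SimpleGraph (Fin n)),
      adimB G ≤ n ∧ bdim G ≤ adimB G ∧ c * Real.log n ≤ (bdim G : ℝ) := by
  have hlog3 : (0:ℝ) < Real.log 3 := Real.log_pos (by norm_num)
  refine ⟨1 / Real.log 3, by positivity, ?_⟩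
  intro n G
  have hmemA : n ∈ {m | ∃ f : Fin n → ℕ, IsResolvingBroadcast G f ∧ (∀ v, f v ≤ 1) ∧ ∑ v, f v = m} :=
    ⟨fun _ => 1, allones_resolving G, fun _ => le_refl 1, by simp⟩
  have hA1 : adimB G ≤ n := Nat.sInf_le hmemA
  obtain ⟨f, hf, -, hsum⟩ := Nat.sInf_mem (⟨n, hmemA⟩ :
    {m | ∃ f : Fin n → ℕ, IsResolvingBroadcast G f ∧ (∀ v, f v ≤ 1) ∧ ∑ v, f v = m}.Nonempty)
  have hA2 : bdim G ≤ adimB G := Nat.sInf_le ⟨f, hf, hsum⟩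
  refine ⟨hA1, hA2, ?_⟩
  obtain ⟨g, hg, hgsum⟩ := Nat.sInf_mem (⟨n, fun _ => 1, allones_resolving G, by simp⟩ :
    {m | ∃ f : Fin n → ℕ, IsResolvingBroadcast G f ∧ ∑ v, f v = m}.Nonempty)
  have hcount : n ≤ 3 ^ bdim G := by
    have := counting G g hg
    rwa [hgsum] at this
  rcases Nat.eq_zero_or_pos n with hn | hn
  · subst hn
    simp
  · have hcast : (n:ℝ) ≤ (3:ℝ) ^ bdim G := by exact_mod_cast hcount
    have hlog : Real.log n ≤ (bdim G : ℝ) * Real.log 3 := by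
      calc Real.log n ≤ Real.log ((3:ℝ) ^ bdim G) :=
            Real.log_le_log (by exact_mod_cast hn) hcast
        _ = (bdim G : ℝ) * Real.log 3 := by rw [Real.log_pow]
    rw [div_mul_eq_mul_div, one_mul, div_le_iff₀ hlog3]
    linarith
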